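/- Let Q ∈ ℝ^{M×M} be the block diagonal matrix with K identical one-factor blocks Q(ρ) = (1-ρ)I_{M_c} + ρ·e_c e_c^T where M = K·M_c and ρ = 2h/((M_c−1)M). Then Q has all diagonal entries 1, its above-diagonal entries sum to h, and λ_max(Q) = 1 + 2h/M, which equals the largest eigenvalue of the one-factor matrix in A_h^M. -/

import Mathlib

open Matrix Finset

lemma count_block (K Mc Mtot : ℕ) (hMc : 0 < Mc) (hM : Mtot = K * Mc) (j : Fin Mtot) :
    (Finset.univ.filter fun i : Fin Mtot => (i : ℕ) / Mc = (j : ℕ) / Mc).card = Mc := by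
  set q := (j : ℕ) / Mc with hq
  have hqK : q < K := by
    rw [hq, Nat.div_lt_iff_lt_mul hMc]
    have := j.isLt
    omega
  have hlt : ∀ r : Fin Mc, q * Mc + (r : ℕ) < Mtot := by
    intro r
    calc q * Mc + (r : ℕ) < q * Mc + Mc := by have := r.isLt; omega
      _ = (q + 1) * Mc := by ring
      _ ≤ K * Mc := Nat.mul_le_mul_right _ hqK
      _ = Mtot := hM.symm
  have key : (Finset.univ.filter fun i : Fin Mtot => (i : ℕ) / Mc = q).card
      = (Finset.univ : Finset (Fin Mc)).card := by
    refine Finset.card_nbij' (fun i : Fin Mtot => (⟨(i : ℕ) % Mc, Nat.mod_lt _ hMc⟩ : Fin Mc))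
      (fun r : Fin Mc => (⟨q * Mc + (r : ℕ), hlt r⟩ : Fin Mtot)) (fun a _ => Finset.mem_univ _)
      ?_ ?_ ?_
    · intro r _
      simp only [Finset.mem_coe, Finset.mem_filter, Finset.mem_univ, true_and]
      show (q * Mc + (r : ℕ)) / Mc = q
      rw [Nat.mul_comm q Mc, Nat.mul_add_div hMc, Nat.div_eq_of_lt r.isLt]
      omega
    · intro i hi
      simp only [Finset.mem_coe, Finset.mem_filter, Finset.mem_univ, true_and] at hi
      apply Fin.ext
      show q * Mc + (i : ℕ) % Mc = (i : ℕ)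
      have h2 := Nat.div_add_mod (i : ℕ) Mc
      rw [hi] at h2
      rw [Nat.mul_comm]
      exact h2
    · intro r _
      apply Fin.ext
      show (q * Mc + (r : ℕ)) % Mc = (r : ℕ)
      rw [Nat.add_comm, Nat.mul_comm, Nat.add_mul_mod_self_left, Nat.mod_eq_of_lt r.isLt]
  rw [key, Finset.card_univ, Fintype.card_fin]

theorem stmt7 (K Mc : ℕ) (hK : 0 < K) (hMc : 2 ≤ Mc) (Mtot : ℕ) (hM : Mtot = K * Mc)
    (h ρ : ℝ) (hρdef : ρ = 2 * h / (((Mc : ℝ) - 1) * (Mtot : ℝ)))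
    (hρ0 : 0 < ρ) (hρ1 : ρ < 1)
    (Q : Matrix (Fin Mtot) (Fin Mtot) ℝ)
    (hQ : ∀ i j : Fin Mtot, Q i j =
      if (i : ℕ) / Mc = (j : ℕ) / Mc then (if i = j then 1 else ρ) else 0)
    (hherm : Q.IsHermitian) :
    (∀ i, Q i i = 1) ∧
    (∑ j : Fin Mtot, ∑ i ∈ Finset.univ.filter (fun i : Fin Mtot => j < i), Q i j = h) ∧
    (⨆ i, hherm.eigenvalues i) = 1 + 2 * h / (Mtot : ℝ) := by
  have hMc0 : 0 < Mc := by omega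
  have hMt0 : 0 < Mtot := by rw [hM]; positivity
  have hMtR : (Mtot : ℝ) ≠ 0 := Nat.cast_ne_zero.mpr (by omega)
  have hMcR : ((Mc : ℝ) - 1) ≠ 0 := by
    have : (2 : ℝ) ≤ (Mc : ℝ) := by exact_mod_cast hMc
    linarith
  have hρh : ρ * (((Mc : ℝ) - 1) * (Mtot : ℝ)) = 2 * h := by
    rw [hρdef]; field_simp
  have hdiag : ∀ i, Q i i = 1 := fun i => by simp [hQ]
  have hsym : ∀ i j, Q i j = Q j i := by
    intro i j
    rcases eq_or_ne i j with rfl | hne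
    · rfl
    · rw [hQ, hQ]
      by_cases hb : (i : ℕ) / Mc = (j : ℕ) / Mc
      · rw [if_pos hb, if_pos hb.symm, if_neg hne, if_neg hne.symm]
      · rw [if_neg hb, if_neg fun hh => hb hh.symm]
  have hcount : ∀ j : Fin Mtot,
      (Finset.univ.filter fun i : Fin Mtot => (i : ℕ) / Mc = (j : ℕ) / Mc).card = Mc :=
    count_block K Mc Mtot hMc0 hM
  -- block indicator sum
  have hblocksum : ∀ j : Fin Mtot,
      (∑ i : Fin Mtot, if (i : ℕ) / Mc = (j : ℕ) / Mc then ρ else 0) = (Mc : ℝ) * ρ := by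
    intro j
    rw [← Finset.sum_filter, Finset.sum_const, hcount j, nsmul_eq_mul]
  -- row sums
  have hrow : ∀ j : Fin Mtot, (∑ i : Fin Mtot, Q i j) = 1 + ((Mc : ℝ) - 1) * ρ := by
    intro j
    have hsplit : ∀ i : Fin Mtot, Q i j =
        (if i = j then (1 - ρ : ℝ) else 0) + (if (i : ℕ) / Mc = (j : ℕ) / Mc then ρ else 0) := by
      intro i
      rcases eq_or_ne i j with rfl | hne
      · simp [hQ]
      · by_cases hb : (i : ℕ) / Mc = (j : ℕ) / Mc <;> simp [hQ, hne, hb]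
    rw [Finset.sum_congr rfl fun i _ => hsplit i, Finset.sum_add_distrib,
      Finset.sum_ite_eq' Finset.univ j fun _ => (1 - ρ : ℝ), hblocksum j]
    simp
    ring
  -- Part 2
  have part2 : (∑ j : Fin Mtot, ∑ i ∈ Finset.univ.filter (fun i : Fin Mtot => j < i), Q i j) = h := by
    have tri : ∀ i j : Fin Mtot, Q i j =
        (if i = j then Q i j else 0) + (if j < i then Q i j else 0) + (if i < j then Q i j else 0) := by
      intro i j
      rcases lt_trichotomy i j with hlt | heq | hgt
      · simp [hlt, hlt.ne, not_lt_of_gt hlt]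
      · simp [heq, lt_irrefl]
      · simp [hgt, hgt.ne', not_lt_of_gt hgt]
    have hS : (∑ j : Fin Mtot, ∑ i : Fin Mtot, Q i j)
        = (Mtot : ℝ) * (1 + ((Mc : ℝ) - 1) * ρ) := by
      rw [Finset.sum_congr rfl fun j _ => hrow j, Finset.sum_const, Finset.card_univ,
        Fintype.card_fin, nsmul_eq_mul]
    have hT : (∑ j : Fin Mtot, ∑ i : Fin Mtot, if i = j then Q i j else 0) = (Mtot : ℝ) := by
      have : ∀ j : Fin Mtot, (∑ i : Fin Mtot, if i = j then Q i j else 0) = 1 := by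
        intro j
        rw [Finset.sum_ite_eq' Finset.univ j fun i => Q i j]
        simp [hdiag]
      rw [Finset.sum_congr rfl fun j _ => this j]
      simp
    set A := ∑ j : Fin Mtot, ∑ i : Fin Mtot, if j < i then Q i j else 0 with hA
    have hAfilter : (∑ j : Fin Mtot, ∑ i ∈ Finset.univ.filter (fun i : Fin Mtot => j < i), Q i j) = A := by
      refine Finset.sum_congr rfl fun j _ => ?_
      rw [Finset.sum_filter]
    have hB : (∑ j : Fin Mtot, ∑ i : Fin Mtot, if i < j then Q i j else 0) = A := by
      rw [Finset.sum_comm]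
      refine Finset.sum_congr rfl fun i _ => Finset.sum_congr rfl fun j _ => ?_
      rw [hsym i j]
    have hsum : (∑ j : Fin Mtot, ∑ i : Fin Mtot, Q i j)
        = (Mtot : ℝ) + A + A := by
      conv_lhs => rw [Finset.sum_congr rfl fun j _ => Finset.sum_congr rfl fun i _ => tri i j]
      simp only [Finset.sum_add_distrib]
      rw [hT, hB]
    rw [hAfilter]
    rw [hS] at hsum
    have : A = (Mtot : ℝ) * (((Mc : ℝ) - 1) * ρ) / 2 := by linarith
    rw [this]
    nlinarith [hρh]
  refine ⟨hdiag, part2, ?_⟩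
  -- Part 3
  have hlam : (1 : ℝ) + ((Mc : ℝ) - 1) * ρ = 1 + 2 * h / (Mtot : ℝ) := by
    have : ((Mc : ℝ) - 1) * ρ = 2 * h / (Mtot : ℝ) := by
      field_simp
      linarith [hρh]
    linarith
  set lam : ℝ := 1 + ((Mc : ℝ) - 1) * ρ with hlamdef
  haveI : Nonempty (Fin Mtot) := ⟨⟨0, hMt0⟩⟩
  have hMccast : ((Mc - 1 : ℕ) : ℝ) = (Mc : ℝ) - 1 := by
    rw [Nat.cast_sub (by omega), Nat.cast_one]
  -- upper bound via Gershgorin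
  have heig : ∀ i, Module.End.HasEigenvalue (Matrix.toLin' Q) (hherm.eigenvalues i) := by
    intro i
    apply Module.End.hasEigenvalue_of_hasEigenvector (x := ⇑(hherm.eigenvectorBasis i))
    refine ⟨Module.End.mem_eigenspace_iff.mpr ?_, ?_⟩
    · rw [Matrix.toLin'_apply, hherm.mulVec_eigenvectorBasis]
    · intro h0
      have hb0 : hherm.eigenvectorBasis i = 0 := by
        ext k; exact congrFun h0 k
      have hn := hherm.eigenvectorBasis.orthonormal.1 i
      rw [hb0] at hn
      simp at hn
  have hub : ∀ i, hherm.eigenvalues i ≤ lam := by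
    intro i
    obtain ⟨k, hk⟩ := eigenvalue_mem_ball (heig i)
    rw [Metric.mem_closedBall, Real.dist_eq] at hk
    have hrad : (∑ j ∈ Finset.univ.erase k, ‖Q k j‖) = ((Mc : ℝ) - 1) * ρ := by
      have hterm : ∀ j ∈ Finset.univ.erase k, ‖Q k j‖
          = if (j : ℕ) / Mc = (k : ℕ) / Mc then ρ else 0 := by
        intro j hj
        have hjk : j ≠ k := Finset.ne_of_mem_erase hj
        rw [hQ]
        by_cases hb : (j : ℕ) / Mc = (k : ℕ) / Mc
        · rw [if_pos hb.symm, if_neg (fun hh => hjk hh.symm), if_pos hb,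
            Real.norm_eq_abs, abs_of_pos hρ0]
        · rw [if_neg (fun hh => hb hh.symm), if_neg hb, norm_zero]
      rw [Finset.sum_congr rfl hterm, ← Finset.sum_filter, Finset.filter_erase,
        Finset.sum_const, Finset.card_erase_of_mem (by simp), hcount k, nsmul_eq_mul, hMccast]
    rw [hdiag k, hrad] at hk
    have := (abs_le.mp hk).2
    rw [hlamdef]
    linarith
  -- spectrum equals range of eigenvalues
  have hspec : spectrum ℝ Q = Set.range hherm.eigenvalues := by
    have hU1 : (hherm.eigenvectorUnitary : Matrix (Fin Mtot) (Fin Mtot) ℝ)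
        * star (hherm.eigenvectorUnitary : Matrix (Fin Mtot) (Fin Mtot) ℝ) = 1 :=
      Matrix.mem_unitaryGroup_iff.mp hherm.eigenvectorUnitary.2
    have hU2 : star (hherm.eigenvectorUnitary : Matrix (Fin Mtot) (Fin Mtot) ℝ)
        * (hherm.eigenvectorUnitary : Matrix (Fin Mtot) (Fin Mtot) ℝ) = 1 :=
      Matrix.mem_unitaryGroup_iff'.mp hherm.eigenvectorUnitary.2
    have key : spectrum ℝ ((hherm.eigenvectorUnitary : Matrix (Fin Mtot) (Fin Mtot) ℝ)
          * Matrix.diagonal (RCLike.ofReal ∘ hherm.eigenvalues)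
          * star (hherm.eigenvectorUnitary : Matrix (Fin Mtot) (Fin Mtot) ℝ))
        = spectrum ℝ (Matrix.diagonal (RCLike.ofReal ∘ hherm.eigenvalues)) :=
      spectrum.units_conjugate
        (u := ⟨(hherm.eigenvectorUnitary : Matrix (Fin Mtot) (Fin Mtot) ℝ),
          star (hherm.eigenvectorUnitary : Matrix (Fin Mtot) (Fin Mtot) ℝ), hU1, hU2⟩)
    have hQ' : Q = (hherm.eigenvectorUnitary : Matrix (Fin Mtot) (Fin Mtot) ℝ)
          * Matrix.diagonal (RCLike.ofReal ∘ hherm.eigenvalues)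
          * star (hherm.eigenvectorUnitary : Matrix (Fin Mtot) (Fin Mtot) ℝ) := by
      exact hherm.spectral_theorem
    rw [← hQ'] at key
    rw [key, spectrum_diagonal, RCLike.ofReal_real_eq_id]
    simp
  -- lam is attained
  have hvec : ∃ i, hherm.eigenvalues i = lam := by
    set v : Fin Mtot → ℝ := fun j => if (j : ℕ) < Mc then 1 else 0 with hv
    have hv0 : v ≠ 0 := by
      intro h0
      have h1 := congrFun h0 ⟨0, hMt0⟩
      rw [hv] at h1
      simp only [Pi.zero_apply] at h1
      rw [if_pos (by simpa using hMc0)] at h1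
      exact one_ne_zero h1
    have hmul : Q *ᵥ v = lam • v := by
      funext j
      show (∑ i, Q j i * v i) = lam * v j
      have hstep : (∑ i, Q j i * v i)
          = ∑ i ∈ Finset.univ.filter (fun i : Fin Mtot => (i : ℕ) / Mc = 0), Q j i := by
        rw [Finset.sum_filter]
        refine Finset.sum_congr rfl fun i _ => ?_
        simp only [hv]
        by_cases hi : (i : ℕ) < Mc
        · rw [if_pos hi, if_pos ((Nat.div_eq_zero_iff_lt hMc0).mpr hi), mul_one]
        · rw [if_neg hi, if_neg (fun hh => hi ((Nat.div_eq_zero_iff_lt hMc0).mp hh)), mul_zero]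
      rw [hstep]
      by_cases hj : (j : ℕ) < Mc
      · have hj0 : (j : ℕ) / Mc = 0 := (Nat.div_eq_zero_iff_lt hMc0).mpr hj
        have hSeq : (Finset.univ.filter (fun i : Fin Mtot => (i : ℕ) / Mc = 0))
            = Finset.univ.filter (fun i : Fin Mtot => (i : ℕ) / Mc = (j : ℕ) / Mc) := by
          rw [hj0]
        rw [hSeq]
        have hjmem : j ∈ Finset.univ.filter (fun i : Fin Mtot => (i : ℕ) / Mc = (j : ℕ) / Mc) := by
          simp
        rw [← Finset.add_sum_erase _ _ hjmem, hdiag j]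
        have hterm : ∀ i ∈ (Finset.univ.filter
            (fun i : Fin Mtot => (i : ℕ) / Mc = (j : ℕ) / Mc)).erase j, Q j i = ρ := by
          intro i hi
          have hij : i ≠ j := Finset.ne_of_mem_erase hi
          have hib := (Finset.mem_filter.mp (Finset.mem_of_mem_erase hi)).2
          rw [hQ, if_pos hib.symm, if_neg (fun hh => hij hh.symm)]
        rw [Finset.sum_congr rfl hterm, Finset.sum_const,
          Finset.card_erase_of_mem hjmem, hcount j, nsmul_eq_mul, hMccast]
        simp only [hv]
        rw [if_pos hj, mul_one, hlamdef]
      · have hj0 : (j : ℕ) / Mc ≠ 0 := fun hh => hj ((Nat.div_eq_zero_iff_lt hMc0).mp hh)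
        have hterm : ∀ i ∈ Finset.univ.filter (fun i : Fin Mtot => (i : ℕ) / Mc = 0),
            Q j i = 0 := by
          intro i hi
          have hib := (Finset.mem_filter.mp hi).2
          rw [hQ, if_neg (by rw [hib]; exact fun hh => hj0 hh)]
        rw [Finset.sum_congr rfl hterm, Finset.sum_const, smul_zero]
        simp only [hv]
        rw [if_neg hj, mul_zero]
    have heigl : Module.End.HasEigenvalue (Matrix.toLin' Q) lam :=
      Module.End.hasEigenvalue_of_hasEigenvector
        ⟨Module.End.mem_eigenspace_iff.mpr (by rw [Matrix.toLin'_apply, hmul]), hv0⟩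
    have hmem : lam ∈ spectrum ℝ Q := by
      rw [← AlgEquiv.spectrum_eq (Matrix.toLinAlgEquiv (Pi.basisFun ℝ (Fin Mtot))) Q]
      exact Module.End.hasEigenvalue_iff_mem_spectrum.mp heigl
    rw [hspec] at hmem
    exact hmem
  obtain ⟨i0, hi0⟩ := hvec
  rw [← hlam]
  apply le_antisymm
  · exact ciSup_le hub
  · calc lam = hherm.eigenvalues i0 := hi0.symm
      _ ≤ ⨆ i, hherm.eigenvalues i :=
        le_ciSup (Set.Finite.bddAbove (Set.finite_range _)) i0
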